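/- Every structured deterministic parity automaton can be transformed in polynomial time into a language-equivalent streamlined automaton on the same transition structure in which, moreover, the new color of each transition is less than or equal to its original color. -/

import Mathlib

open Classical

universe u v

/-- A deterministic parity automaton with transition-based acceptance. -/
structure DPA (Q : Type u) (A : Type v) where
  init : Q
  trans : Q → A → Q
  color : Q → A → ℕ

/-- A word (or a color sequence) hits value `c` infinitely often. -/
def InfOften (f : ℕ → ℕ) (c : ℕ) : Prop := ∀ N, ∃ n, N ≤ n ∧ f n = c

namespace DPA

variable {Q : Type u} {A : Type v}

/-- The unique run of a DPA from state `q` on infinite word `w`. -/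
def runFrom (M : DPA Q A) (q : Q) (w : ℕ → A) : ℕ → Q
  | 0 => q
  | n + 1 => M.trans (M.runFrom q w n) (w n)

/-- The color sequence of the run from `q` on `w`. -/
def colorsFrom (M : DPA Q A) (q : Q) (w : ℕ → A) (n : ℕ) : ℕ :=
  M.color (M.runFrom q w n) (w n)

/-- The dominating (least infinitely often occurring) color of the run from `q` on `w`. -/
noncomputable def domColorFrom (M : DPA Q A) (q : Q) (w : ℕ → A) : ℕ :=
  sInf {c | InfOften (M.colorsFrom q w) c}

/-- Parity acceptance from a state. -/
def acceptsFrom (M : DPA Q A) (q : Q) (w : ℕ → A) : Prop :=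
  Even (M.domColorFrom q w)

def langFrom (M : DPA Q A) (q : Q) : Set (ℕ → A) := {w | M.acceptsFrom q w}

def lang (M : DPA Q A) : Set (ℕ → A) := M.langFrom M.init

/-- Language equivalence of states. -/
def LangEquiv (M : DPA Q A) (q q' : Q) : Prop := M.langFrom q = M.langFrom q'

/-- Reachability in the transition structure. -/
def Reach (M : DPA Q A) : Q → Q → Prop :=
  Relation.ReflTransGen (fun a b => ∃ x, M.trans a x = b)

/-- A DPA is structured: all states reachable, and language-equivalent states are
mutually reachable (same maximal SCC). -/
def Structured (M : DPA Q A) : Prop :=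
  (∀ q, M.Reach M.init q) ∧
  ∀ q q', M.LangEquiv q q' → M.Reach q q' ∧ M.Reach q' q

noncomputable def maxColor (M : DPA Q A) [Fintype Q] [Fintype A] : ℕ :=
  Finset.univ.sup fun t : Q × A => M.color t.1 t.2

/-- Same transition structure, new coloring. -/
def recolor (M : DPA Q A) (c : Q × A → ℕ) : DPA Q A :=
  ⟨M.init, M.trans, fun q x => c (q, x)⟩

/-- Extension of the transition function to finite words. -/
def runList (M : DPA Q A) (q : Q) (u : List A) : Q := u.foldl M.trans q

end DPA

/-- A (nondeterministic) automaton with colored transitions; used as co-Büchi automaton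
(colors 1 = rejecting, 2 = accepting). -/
structure NCA (Q : Type u) (A : Type v) where
  inits : Set Q
  trans : Set (Q × A × Q × ℕ)

namespace NCA

variable {Q : Type u} {A : Type v}

def IsRun (N : NCA Q A) (w : ℕ → A) (ρ : ℕ → Q) (γ : ℕ → ℕ) : Prop :=
  ρ 0 ∈ N.inits ∧ ∀ n, (ρ n, w n, ρ (n + 1), γ n) ∈ N.trans

/-- Co-Büchi acceptance: some run takes rejecting transitions only finitely often,
i.e. from some point on only accepting (color 2) transitions. -/
def accepts (N : NCA Q A) (w : ℕ → A) : Prop :=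
  ∃ ρ γ, N.IsRun w ρ γ ∧ ∃ p, ∀ n, p ≤ n → γ n = 2

/-- A finite run prefix on a finite word. -/
def FinRunOn (N : NCA Q A) (xs : List A) (ρ : ℕ → Q) (γ : ℕ → ℕ) : Prop :=
  ρ 0 ∈ N.inits ∧ ∀ k (hk : k < xs.length), (ρ k, xs[k], ρ (k + 1), γ k) ∈ N.trans

end NCA

namespace DPA

variable {Q : Type u} {A : Type v}

/-- The co-Büchi automaton `A_i` derived from a DPA: transitions of color ≥ i become
accepting (2), those of color < i rejecting (1), plus rejecting transitions to every
state language-equivalent to the deterministic successor that is not already a target. -/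
def derived (M : DPA Q A) (i : ℕ) : NCA Q A where
  inits := {M.init}
  trans :=
    {t | ∃ q x, t = (q, x, M.trans q x, if i ≤ M.color q x then 2 else 1)} ∪
    {t | ∃ q x q'', q'' ≠ M.trans q x ∧ M.LangEquiv q'' (M.trans q x) ∧ t = (q, x, q'', 1)}

end DPA

/-- State of the streamlining procedure: remaining coloring graph (as set of transitions,
identified by source state and letter), current color assignment, and counter. -/
structure SState (Q : Type u) (A : Type v) where
  graph : Set (Q × A)
  col : Q × A → ℕ
  counter : ℕ

namespace DPA

variable {Q : Type u} {A : Type v}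

/-- Edge relation of the coloring graph `G`. -/
def edgeIn (M : DPA Q A) (G : Set (Q × A)) (a b : Q) : Prop :=
  ∃ x, (a, x) ∈ G ∧ M.trans a x = b

def reachIn (M : DPA Q A) (G : Set (Q × A)) : Q → Q → Prop :=
  Relation.ReflTransGen (M.edgeIn G)

def SameSCC (M : DPA Q A) (G : Set (Q × A)) (a b : Q) : Prop :=
  M.reachIn G a b ∧ M.reachIn G b a

/-- A transition is transient in `G` if it lies on no cycle of `G`. -/
def Transient (M : DPA Q A) (G : Set (Q × A)) (t : Q × A) : Prop :=
  ¬ M.reachIn G (M.trans t.1 t.2) t.1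

/-- The least color (under `col`) of transitions lying within the SCC of `q` in `G`. -/
noncomputable def sccMinCol (M : DPA Q A) (G : Set (Q × A)) (col : Q × A → ℕ) (q : Q) : ℕ :=
  sInf {c | ∃ p x, (p, x) ∈ G ∧ M.SameSCC G p q ∧ M.SameSCC G (M.trans p x) q ∧
    col (p, x) = c}

/-- One step of the streamlining procedure (Carton–Maceiras style):
recolor/remove transient transitions if any; otherwise recolor/remove minimal-color
transitions of SCCs whose minimal color has the counter's parity if any;
otherwise increment the counter. -/
noncomputable def streamStep (M : DPA Q A) (s : SState Q A) : SState Q A :=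
  if s.graph = ∅ then s
  else
    let T := {t ∈ s.graph | M.Transient s.graph t}
    if T ≠ ∅ then
      ⟨s.graph \ T, fun t => if t ∈ T then s.counter else s.col t, s.counter⟩
    else
      let R := {t ∈ s.graph | M.SameSCC s.graph t.1 (M.trans t.1 t.2) ∧
        s.col t = M.sccMinCol s.graph s.col t.1 ∧ s.col t % 2 = s.counter % 2}
      if R ≠ ∅ then
        ⟨s.graph \ R, fun t => if t ∈ R then s.counter else s.col t, s.counter⟩
      else ⟨s.graph, s.col, s.counter + 1⟩

/-- The streamlining procedure after `n` steps, starting from the full transition graph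
with the original colors and counter 0. -/
noncomputable def streamRun (M : DPA Q A) (n : ℕ) : SState Q A :=
  (M.streamStep)^[n] ⟨Set.univ, fun t => M.color t.1 t.2, 0⟩

/-- A co-run: follow the run for a finite prefix, then once jump to a language-equivalent
state and follow the deterministic transitions from there. -/
def IsCoRun (M : DPA Q A) (w : ℕ → A) (σ : ℕ → Q) : Prop :=
  ∃ p, 0 < p ∧ (∀ n, n < p → σ n = M.runFrom M.init w n) ∧
    M.LangEquiv (σ p) (M.runFrom M.init w p) ∧
    ∀ n, p ≤ n → σ (n + 1) = M.trans (σ n) (w n)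

/-- The dominating (least infinitely often occurring) color along a co-run. -/
noncomputable def coRunDom (M : DPA Q A) (w : ℕ → A) (σ : ℕ → Q) : ℕ :=
  sInf {c | InfOften (fun n => M.color (σ n) (w n)) c}

/-- An accepting SCC (for threshold color `i`): a nonempty state set with a nonempty set of
transitions of color ≥ i among them that is strongly connected. -/
def AccSCC (M : DPA Q A) (i : ℕ) (S : Set Q) (T : Set (Q × A)) : Prop :=
  S.Nonempty ∧ T.Nonempty ∧
  (∀ t ∈ T, t.1 ∈ S ∧ M.trans t.1 t.2 ∈ S ∧ i ≤ M.color t.1 t.2) ∧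
  ∀ q ∈ S, ∀ q' ∈ S,
    Relation.ReflTransGen (fun a b => ∃ x, (a, x) ∈ T ∧ M.trans a x = b) q q'

/-- Redirect the transition `(s, x)` to target `q'` instead. -/
noncomputable def redirect (M : DPA Q A) (s : Q) (x : A) (q' : Q) : DPA Q A :=
  ⟨M.init, fun a y => if a = s ∧ y = x then q' else M.trans a y, M.color⟩

end DPA

section Words

variable {A : Type v} [Inhabited A]

/-- Prepend a finite word to an infinite word. -/
def listApp (u : List A) (w : ℕ → A) : ℕ → A :=
  fun n => if n < u.length then u.getD n default else w (n - u.length)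

/-- The suffix language of `L` after the finite word `u`. -/
def suffixLang (L : Set (ℕ → A)) (u : List A) : Set (ℕ → A) :=
  {w | listApp u w ∈ L}

/-- `u` is suffix-language-invariant for `L` after `w`. -/
def SuffixInv (L : Set (ℕ → A)) (u w : List A) : Prop :=
  suffixLang L w = suffixLang L (w ++ u)

/-- The first `n` letters of an infinite word. -/
def prefixList (w : ℕ → A) (n : ℕ) : List A := (List.range n).map w

/-- The finite segment `w a, w (a+1), ..., w (b-1)` of an infinite word. -/
def seg (w : ℕ → A) (a b : ℕ) : List A := (List.range (b - a)).map fun k => w (a + k)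

/-- `w'` results from a suffix-language-invariant injection of finite words into `w`
at the positions in `J`: there is a monotone reindexing `f` of the letters of `w`, the
gaps occur only after positions in `J`, and each inserted segment is
suffix-language-invariant for `L` after the corresponding prefix of `w`. -/
def IsInj (L : Set (ℕ → A)) (w : ℕ → A) (J : Set ℕ) (w' : ℕ → A) : Prop :=
  ∃ f : ℕ → ℕ, f 0 = 0 ∧ (∀ n, w' (f n) = w n) ∧
    (∀ n, n ∉ J → f (n + 1) = f n + 1) ∧
    (∀ n, n ∈ J → f n < f (n + 1) ∧
      SuffixInv L (seg w' (f n + 1) (f (n + 1))) (prefixList w (n + 1)))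

/-- `w` is at home in color `i` for the language `L`. -/
def AtHome (L : Set (ℕ → A)) (i : ℕ) (w : ℕ → A) : Prop :=
  ∃ J : Set ℕ, J.Infinite ∧ ∀ w', IsInj L w J w' →
    (∃ i', ∃ _ : i' < i, AtHome L i' w') ∨
    ((w ∈ L ∧ w' ∈ L ∧ Even i) ∨ (w ∉ L ∧ w' ∉ L ∧ Odd i))
  termination_by i

/-- The natural color of `w` for `L`: the least color `w` is at home in. -/
noncomputable def naturalColor (L : Set (ℕ → A)) (w : ℕ → A) : ℕ :=
  sInf {i | AtHome L i w}

/-- The ultimately periodic word `u v^ω`. -/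
def upw (u v : List A) : ℕ → A :=
  fun n => if n < u.length then u.getD n default
           else v.getD ((n - u.length) % v.length) default

/-- Insert the finite word `u` immediately after position `j` of `w`. -/
def insertWord (w : ℕ → A) (j : ℕ) (u : List A) : ℕ → A :=
  fun n => if n ≤ j then w n
           else if n - (j + 1) < u.length then u.getD (n - (j + 1)) default
           else w (n - u.length)

end Words


section StreamliningProof

open DPA

variable {Q : Type u} {A : Type v}

namespace SLaux

lemma sameSCC_refl (M : DPA Q A) (G : Set (Q × A)) (a : Q) : M.SameSCC G a a :=
  ⟨Relation.ReflTransGen.refl, Relation.ReflTransGen.refl⟩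

lemma sameSCC_symm {M : DPA Q A} {G : Set (Q × A)} {a b : Q}
    (h : M.SameSCC G a b) : M.SameSCC G b a := ⟨h.2, h.1⟩

lemma sameSCC_trans {M : DPA Q A} {G : Set (Q × A)} {a b c : Q}
    (h : M.SameSCC G a b) (h' : M.SameSCC G b c) : M.SameSCC G a c :=
  ⟨h.1.trans h'.1, h'.2.trans h.2⟩

lemma sccMinCol_congr {M : DPA Q A} {G : Set (Q × A)} {col : Q × A → ℕ} {a b : Q}
    (h : M.SameSCC G a b) : M.sccMinCol G col a = M.sccMinCol G col b := by
  unfold DPA.sccMinCol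
  congr 1
  ext c
  constructor <;> rintro ⟨p, x, h1, h2, h3, h4⟩
  · exact ⟨p, x, h1, sameSCC_trans h2 h, sameSCC_trans h3 h, h4⟩
  · exact ⟨p, x, h1, sameSCC_trans h2 (sameSCC_symm h), sameSCC_trans h3 (sameSCC_symm h), h4⟩

/-- The combined invariant. -/
def Inv (M : DPA Q A) (s : SState Q A) : Prop :=
  (∀ t ∈ s.graph, s.col t = M.color t.1 t.2) ∧ (∀ t ∈ s.graph, s.counter ≤ s.col t)

/-- Case analysis of one step on a nonempty graph. -/
lemma streamStep_cases (M : DPA Q A) (s : SState Q A) (hne : s.graph ≠ ∅) :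
    (∃ D : Set (Q × A), D ⊆ s.graph ∧ D ≠ ∅ ∧
      M.streamStep s = ⟨s.graph \ D, fun t => if t ∈ D then s.counter else s.col t, s.counter⟩ ∧
      (∀ t ∈ D, M.Transient s.graph t ∨
        (M.SameSCC s.graph t.1 (M.trans t.1 t.2) ∧ s.col t = M.sccMinCol s.graph s.col t.1 ∧
          s.col t % 2 = s.counter % 2)))
    ∨ (M.streamStep s = ⟨s.graph, s.col, s.counter + 1⟩ ∧
      {t ∈ s.graph | M.Transient s.graph t} = ∅ ∧
      {t ∈ s.graph | M.SameSCC s.graph t.1 (M.trans t.1 t.2) ∧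
        s.col t = M.sccMinCol s.graph s.col t.1 ∧ s.col t % 2 = s.counter % 2} = ∅) := by
  unfold DPA.streamStep
  rw [if_neg hne]
  by_cases hT : {t ∈ s.graph | M.Transient s.graph t} ≠ ∅
  · rw [if_pos hT]
    refine Or.inl ⟨_, fun t ht => ht.1, hT, ?_, fun t ht => Or.inl ht.2⟩
    congr
    funext t
    by_cases h : t ∈ {t | t ∈ s.graph ∧ M.Transient s.graph t}
    · rw [if_pos h, if_pos h]
    · rw [if_neg h, if_neg h]
  · rw [if_neg hT]
    by_cases hR : {t ∈ s.graph | M.SameSCC s.graph t.1 (M.trans t.1 t.2) ∧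
        s.col t = M.sccMinCol s.graph s.col t.1 ∧ s.col t % 2 = s.counter % 2} ≠ ∅
    · rw [if_pos hR]
      refine Or.inl ⟨_, fun t ht => ht.1, hR, ?_, fun t ht => Or.inr ht.2⟩
      congr
      funext t
      by_cases h : t ∈ {t | t ∈ s.graph ∧ M.SameSCC s.graph t.1 (M.trans t.1 t.2) ∧
          s.col t = M.sccMinCol s.graph s.col t.1 ∧ s.col t % 2 = s.counter % 2}
      · rw [if_pos h, if_pos h]
      · rw [if_neg h, if_neg h]
    · rw [if_neg hR]
      push_neg at hT hR
      exact Or.inr ⟨rfl, hT, hR⟩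

lemma streamStep_empty (M : DPA Q A) (s : SState Q A) (h : s.graph = ∅) :
    M.streamStep s = s := by
  unfold DPA.streamStep; rw [if_pos h]

lemma step_graph_subset (M : DPA Q A) (s : SState Q A) :
    (M.streamStep s).graph ⊆ s.graph := by
  by_cases h : s.graph = ∅
  · rw [streamStep_empty M s h]
  · rcases streamStep_cases M s h with ⟨D, _, _, heq, _⟩ | ⟨heq, _, _⟩
    · rw [heq]; exact Set.diff_subset
    · rw [heq]

lemma step_counter_mono (M : DPA Q A) (s : SState Q A) :
    s.counter ≤ (M.streamStep s).counter := by
  by_cases h : s.graph = ∅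
  · rw [streamStep_empty M s h]
  · rcases streamStep_cases M s h with ⟨D, _, _, heq, _⟩ | ⟨heq, _, _⟩
    · rw [heq]
    · rw [heq]; exact Nat.le_succ _

lemma step_col_of_mem (M : DPA Q A) (s : SState Q A) {t : Q × A}
    (ht : t ∈ (M.streamStep s).graph) : (M.streamStep s).col t = s.col t := by
  by_cases h : s.graph = ∅
  · rw [streamStep_empty M s h]
  · rcases streamStep_cases M s h with ⟨D, _, _, heq, _⟩ | ⟨heq, _, _⟩
    · rw [heq] at ht ⊢
      exact if_neg ht.2
    · rw [heq]

lemma step_col_of_not_mem (M : DPA Q A) (s : SState Q A) {t : Q × A}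
    (ht : t ∉ s.graph) : (M.streamStep s).col t = s.col t ∧ t ∉ (M.streamStep s).graph := by
  refine ⟨?_, fun h => ht (step_graph_subset M s h)⟩
  by_cases h : s.graph = ∅
  · rw [streamStep_empty M s h]
  · rcases streamStep_cases M s h with ⟨D, hD, _, heq, _⟩ | ⟨heq, _, _⟩
    · rw [heq]
      exact if_neg (fun hm => ht (hD hm))
    · rw [heq]

lemma step_col_removed (M : DPA Q A) (s : SState Q A) {t : Q × A}
    (ht : t ∈ s.graph) (ht' : t ∉ (M.streamStep s).graph) :
    (M.streamStep s).col t = s.counter ∧ (M.streamStep s).counter = s.counter := by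
  by_cases h : s.graph = ∅
  · exact absurd (h ▸ ht) (Set.notMem_empty t)
  · rcases streamStep_cases M s h with ⟨D, hD, _, heq, _⟩ | ⟨heq, _, _⟩
    · rw [heq] at ht' ⊢
      have : t ∈ D := by
        by_contra hc; exact ht' ⟨ht, hc⟩
      exact ⟨if_pos this, rfl⟩
    · rw [heq] at ht'
      exact absurd ht ht'

lemma inv_step (M : DPA Q A) (s : SState Q A) (hs : Inv M s) : Inv M (M.streamStep s) := by
  by_cases h : s.graph = ∅
  · rw [streamStep_empty M s h]; exact hs
  rcases streamStep_cases M s h with ⟨D, hD, _, heq, _⟩ | ⟨heq, hT, hR⟩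
  · rw [heq]
    constructor
    · intro t ht
      simp only [Set.mem_diff] at ht
      show (if t ∈ D then s.counter else s.col t) = _
      rw [if_neg ht.2]
      exact hs.1 t ht.1
    · intro t ht
      simp only [Set.mem_diff] at ht
      show s.counter ≤ (if t ∈ D then s.counter else s.col t)
      rw [if_neg ht.2]
      exact hs.2 t ht.1
  · rw [heq]
    refine ⟨hs.1, ?_⟩
    intro t ht
    simp only
    -- show s.counter + 1 ≤ s.col t, i.e. s.col t ≠ s.counter
    rcases Nat.lt_or_ge s.counter (s.col t) with hlt | hge
    · exact hlt
    exfalso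
    have hcq : s.col t = s.counter := le_antisymm hge (hs.2 t ht)
    -- t is not transient
    have hnt : ¬ M.Transient s.graph t := by
      intro htr
      have : t ∈ {t ∈ s.graph | M.Transient s.graph t} := ⟨ht, htr⟩
      rw [hT] at this; exact this
    have hreach : M.reachIn s.graph (M.trans t.1 t.2) t.1 := not_not.mp hnt
    have hedge : M.edgeIn s.graph t.1 (M.trans t.1 t.2) := ⟨t.2, by simpa using ht, rfl⟩
    have hscc : M.SameSCC s.graph t.1 (M.trans t.1 t.2) :=
      ⟨Relation.ReflTransGen.single hedge, hreach⟩
    -- the defining set of sccMinCol at t.1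
    set S := {c | ∃ p x, (p, x) ∈ s.graph ∧ M.SameSCC s.graph p t.1 ∧
      M.SameSCC s.graph (M.trans p x) t.1 ∧ s.col (p, x) = c} with hS
    have hmemS : s.col t ∈ S := by
      refine ⟨t.1, t.2, by simpa using ht, sameSCC_refl M _ _, sameSCC_symm hscc, rfl⟩
    have hSnonempty : S.Nonempty := ⟨_, hmemS⟩
    have hSlb : ∀ c ∈ S, s.counter ≤ c := by
      rintro c ⟨p, x, hpx, _, _, rfl⟩
      exact hs.2 (p, x) hpx
    have hmin : M.sccMinCol s.graph s.col t.1 = s.counter := by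
      apply le_antisymm
      · calc sInf S ≤ s.col t := Nat.sInf_le hmemS
          _ = s.counter := hcq
      · exact le_csInf hSnonempty hSlb
    -- a member attaining the sInf yields a member of R
    obtain ⟨p, x, hpx, hscc1, hscc2, hcolpx⟩ := Nat.sInf_mem hSnonempty
    have hpxscc : M.SameSCC s.graph p (M.trans p x) :=
      sameSCC_trans hscc1 (sameSCC_symm hscc2)
    have hminp : M.sccMinCol s.graph s.col p = M.sccMinCol s.graph s.col t.1 :=
      sccMinCol_congr hscc1
    have hmem : (p, x) ∈ {t ∈ s.graph | M.SameSCC s.graph t.1 (M.trans t.1 t.2) ∧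
        s.col t = M.sccMinCol s.graph s.col t.1 ∧ s.col t % 2 = s.counter % 2} := by
      have hmin' : sInf S = s.counter := hmin
      refine ⟨hpx, hpxscc, ?_, ?_⟩
      · show s.col (p, x) = M.sccMinCol s.graph s.col p
        rw [hcolpx, hminp, hmin, hmin']
      · show s.col (p, x) % 2 = s.counter % 2
        rw [hcolpx, hmin']
    rw [hR] at hmem; exact hmem

lemma streamRun_succ (M : DPA Q A) (n : ℕ) :
    M.streamRun (n + 1) = M.streamStep (M.streamRun n) := by
  unfold DPA.streamRun
  rw [Function.iterate_succ_apply']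

lemma inv_run (M : DPA Q A) (n : ℕ) : Inv M (M.streamRun n) := by
  induction n with
  | zero => exact ⟨fun t _ => rfl, fun t _ => Nat.zero_le _⟩
  | succ n ih => rw [streamRun_succ]; exact inv_step M _ ih

lemma run_graph_antitone (M : DPA Q A) {m n : ℕ} (h : m ≤ n) :
    (M.streamRun n).graph ⊆ (M.streamRun m).graph := by
  induction n with
  | zero => rw [Nat.le_zero.mp h]
  | succ n ih =>
    rcases Nat.lt_or_ge m (n + 1) with h' | h'
    · exact (streamRun_succ M n ▸ step_graph_subset M (M.streamRun n)).trans
        (ih (Nat.lt_succ_iff.mp h'))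
    · rw [le_antisymm h h']

lemma run_counter_mono (M : DPA Q A) {m n : ℕ} (h : m ≤ n) :
    (M.streamRun m).counter ≤ (M.streamRun n).counter := by
  induction n with
  | zero => rw [Nat.le_zero.mp h]
  | succ n ih =>
    rcases Nat.lt_or_ge m (n + 1) with h' | h'
    · exact (ih (Nat.lt_succ_iff.mp h')).trans
        (streamRun_succ M n ▸ step_counter_mono M (M.streamRun n))
    · rw [le_antisymm h h']

lemma run_col_stable (M : DPA Q A) {m : ℕ} {t : Q × A} (ht : t ∉ (M.streamRun m).graph)
    {n : ℕ} (h : m ≤ n) :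
    (M.streamRun n).col t = (M.streamRun m).col t ∧ t ∉ (M.streamRun n).graph := by
  induction n with
  | zero => rw [Nat.le_zero.mp h] at ht ⊢; exact ⟨rfl, ht⟩
  | succ n ih =>
    rcases Nat.lt_or_ge m (n + 1) with h' | h'
    · obtain ⟨h1, h2⟩ := ih (Nat.lt_succ_iff.mp h')
      rw [streamRun_succ]
      obtain ⟨h3, h4⟩ := step_col_of_not_mem M (M.streamRun n) h2
      exact ⟨h3.trans h1, h4⟩
    · rw [le_antisymm h h'] at ht ⊢; exact ⟨rfl, ht⟩

/-- Every transition not in the graph at time `n` was removed at a definite time `c < n`,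
and its color from then on is the counter at time `c`. -/
lemma removal_time (M : DPA Q A) {n : ℕ} {t : Q × A} (ht : t ∉ (M.streamRun n).graph) :
    ∃ c, c < n ∧ t ∈ (M.streamRun c).graph ∧ t ∉ (M.streamRun (c + 1)).graph ∧
      (M.streamRun n).col t = (M.streamRun c).counter := by
  have h0 : t ∈ (M.streamRun 0).graph := Set.mem_univ t
  have hex : ∃ k, t ∉ (M.streamRun k).graph := ⟨n, ht⟩
  classical
  let L := Nat.find hex
  have hL : t ∉ (M.streamRun L).graph := Nat.find_spec hex
  have hLpos : 0 < L := by
    rcases Nat.eq_zero_or_pos L with h | h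
    · exact absurd (h ▸ hL) (fun hc => hc h0)
    · exact h
  have hLn : L ≤ n := Nat.find_le ht
  have hmem : t ∈ (M.streamRun (L - 1)).graph := by
    by_contra hc
    have h1 : L ≤ L - 1 := Nat.find_le hc
    omega
  refine ⟨L - 1, by omega, hmem, ?_, ?_⟩
  · have : L - 1 + 1 = L := by omega
    rw [this]; exact hL
  · have hc1 : L - 1 + 1 = L := by omega
    have hrem : t ∉ (M.streamRun (L - 1 + 1)).graph := by rw [hc1]; exact hL
    have hcol : (M.streamRun (L - 1 + 1)).col t = (M.streamRun (L - 1)).counter := by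
      rw [streamRun_succ] at hrem ⊢
      exact (step_col_removed M (M.streamRun (L - 1)) hmem hrem).1
    obtain ⟨hs, _⟩ := run_col_stable M (hc1 ▸ hrem : t ∉ (M.streamRun L).graph) hLn
    calc (M.streamRun n).col t = (M.streamRun L).col t := hs
      _ = (M.streamRun (L - 1 + 1)).col t := by rw [hc1]
      _ = (M.streamRun (L - 1)).counter := hcol

lemma final_col_le (M : DPA Q A) {n : ℕ} {t : Q × A} (ht : t ∉ (M.streamRun n).graph) :
    (M.streamRun n).col t ≤ M.color t.1 t.2 := by
  obtain ⟨c, _, hmem, _, hcol⟩ := removal_time M ht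
  rw [hcol]
  calc (M.streamRun c).counter ≤ (M.streamRun c).col t := (inv_run M c).2 t hmem
    _ = M.color t.1 t.2 := (inv_run M c).1 t hmem

section Terminate

variable [Fintype Q] [Fintype A]

lemma counter_le_maxColor (M : DPA Q A) (s : SState Q A) (hs : Inv M s)
    (h : s.graph ≠ ∅) : s.counter ≤ M.maxColor := by
  obtain ⟨t, ht⟩ := Set.nonempty_iff_ne_empty.mpr h
  calc s.counter ≤ s.col t := hs.2 t ht
    _ = M.color t.1 t.2 := hs.1 t ht
    _ ≤ M.maxColor := Finset.le_sup (f := fun t : Q × A => M.color t.1 t.2) (Finset.mem_univ t)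

noncomputable def meas (M : DPA Q A) (s : SState Q A) : ℕ :=
  s.graph.ncard + (M.maxColor + 1 - s.counter)

lemma meas_decr (M : DPA Q A) (s : SState Q A) (hs : Inv M s) (h : s.graph ≠ ∅) :
    meas M (M.streamStep s) < meas M s := by
  have hcb := counter_le_maxColor M s hs h
  rcases streamStep_cases M s h with ⟨D, hD, hDne, heq, _⟩ | ⟨heq, _, _⟩
  · obtain ⟨d, hd⟩ := Set.nonempty_iff_ne_empty.mpr hDne
    have hss : s.graph \ D ⊂ s.graph :=
      ⟨Set.diff_subset, fun hsub => (hsub (hD hd)).2 hd⟩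
    have hlt : (s.graph \ D).ncard < s.graph.ncard :=
      Set.ncard_lt_ncard hss (Set.toFinite _)
    unfold meas
    rw [heq]
    exact Nat.add_lt_add_right hlt _
  · unfold meas
    rw [heq]
    have : M.maxColor + 1 - (s.counter + 1) < M.maxColor + 1 - s.counter := by omega
    exact Nat.add_lt_add_left this _

lemma graph_empty_stage (M : DPA Q A) :
    (M.streamRun (Fintype.card Q * Fintype.card A + M.maxColor + 1)).graph = ∅ := by
  set n0 := Fintype.card Q * Fintype.card A + M.maxColor + 1 with hn0
  have hmeas0 : meas M (M.streamRun 0) = n0 := by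
    unfold meas
    show (Set.univ : Set (Q × A)).ncard + (M.maxColor + 1 - 0) = n0
    rw [Set.ncard_univ, Nat.card_eq_fintype_card, Fintype.card_prod]
    omega
  have key : ∀ n, (M.streamRun n).graph = ∅ ∨ meas M (M.streamRun n) + n ≤ n0 := by
    intro n
    induction n with
    | zero => right; rw [hmeas0]
    | succ n ih =>
      by_cases hg : (M.streamRun n).graph = ∅
      · left
        rw [streamRun_succ, streamStep_empty M _ hg]
        exact hg
      · rcases ih with h | h
        · exact absurd h hg
        · right
          have := meas_decr M (M.streamRun n) (inv_run M n) hg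
          rw [streamRun_succ]
          omega
  rcases key n0 with h | h
  · exact h
  · have hm : meas M (M.streamRun n0) = 0 := by omega
    unfold meas at hm
    have h2 : (M.streamRun n0).graph.ncard = 0 := Nat.eq_zero_of_add_eq_zero_right hm
    exact ((Set.ncard_eq_zero (Set.toFinite _)).mp h2)

end Terminate

/-- Core lemma: for a strongly connected set of transitions, the final streamlined
coloring has the same minimal parity as the original coloring. -/
lemma core_parity (M : DPA Q A) (N : ℕ) (hN : (M.streamRun N).graph = ∅)
    (I : Set (Q × A)) (hne : I.Nonempty)
    (hSC : ∀ t ∈ I, ∀ t' ∈ I, Relation.ReflTransGen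
      (fun a b => ∃ y, (a, y) ∈ I ∧ M.trans a y = b) (M.trans t.1 t.2) t'.1) :
    sInf ((M.streamRun N).col '' I) % 2 = sInf ((fun t : Q × A => M.color t.1 t.2) '' I) % 2 := by
  classical
  have hex : ∃ k, ¬ I ⊆ (M.streamRun k).graph := by
    obtain ⟨t, ht⟩ := hne
    exact ⟨N, fun hsub => (hN ▸ hsub ht : t ∈ (∅ : Set (Q × A)))⟩
  let L := Nat.find hex
  have hL : ¬ I ⊆ (M.streamRun L).graph := Nat.find_spec hex
  have hLpos : 0 < L := by
    rcases Nat.eq_zero_or_pos L with h | h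
    · exfalso; apply hL; rw [h]; intro t _; exact Set.mem_univ t
    · exact h
  set j := L - 1 with hj
  have hjL : j + 1 = L := by omega
  have hjsub : I ⊆ (M.streamRun j).graph := by
    by_contra hc
    have : L ≤ j := Nat.find_le hc
    omega
  obtain ⟨t0, ht0I, ht0r⟩ : ∃ t0 ∈ I, t0 ∉ (M.streamRun (j + 1)).graph := by
    rw [hjL]
    by_contra hc
    push_neg at hc
    exact hL hc
  have hgne : (M.streamRun j).graph ≠ ∅ := by
    intro h
    exact (h ▸ hjsub ht0I : t0 ∈ (∅ : Set (Q × A)))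
  set s := M.streamRun j with hsdef
  set k := s.counter with hk
  have hInv := inv_run M j
  -- reachability lift
  have hlift : ∀ a b, Relation.ReflTransGen
      (fun a b => ∃ y, (a, y) ∈ I ∧ M.trans a y = b) a b → M.reachIn s.graph a b := by
    intro a b h
    refine Relation.ReflTransGen.mono ?_ a b h
    rintro a b ⟨y, hy, hxy⟩
    exact ⟨y, hjsub hy, hxy⟩
  have hedgeI : ∀ t ∈ I, M.edgeIn s.graph t.1 (M.trans t.1 t.2) := by
    intro t ht
    exact ⟨t.2, hjsub ht, rfl⟩
  have hreach : ∀ t ∈ I, ∀ t' ∈ I, M.reachIn s.graph (M.trans t.1 t.2) t'.1 :=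
    fun t ht t' ht' => hlift _ _ (hSC t ht t' ht')
  have hscc1 : ∀ t ∈ I, M.SameSCC s.graph t.1 t0.1 := by
    intro t ht
    exact ⟨Relation.ReflTransGen.head (hedgeI t ht) (hreach t ht t0 ht0I),
      Relation.ReflTransGen.head (hedgeI t0 ht0I) (hreach t0 ht0I t ht)⟩
  have hscc2 : ∀ t ∈ I, M.SameSCC s.graph (M.trans t.1 t.2) t0.1 := by
    intro t ht
    refine ⟨hreach t ht t0 ht0I, ?_⟩
    exact Relation.ReflTransGen.tail
      (Relation.ReflTransGen.head (hedgeI t0 ht0I) (hreach t0 ht0I t ht)) (hedgeI t ht)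
  -- analyze the removal step j → j+1
  have hstep : M.streamRun (j + 1) = M.streamStep s := streamRun_succ M j
  rcases streamStep_cases M s hgne with ⟨D, hD, hDne, heq, hprop⟩ | ⟨heq, _, _⟩
  · have ht0D : t0 ∈ D := by
      rw [hstep, heq] at ht0r
      by_contra hc
      exact ht0r ⟨hjsub ht0I, hc⟩
    rcases hprop t0 ht0D with htr | ⟨_, hmin, hpar⟩
    · -- transient: contradiction
      exfalso
      exact htr (hlift _ _ (hSC t0 ht0I t0 ht0I))
    -- R branch
    have hcolt0 : s.col t0 = M.color t0.1 t0.2 := hInv.1 t0 (hjsub ht0I)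
    -- minimality of the old color of t0 on I
    have hlb : ∀ t ∈ I, s.col t0 ≤ M.color t.1 t.2 := by
      intro t ht
      have hmem : M.color t.1 t.2 ∈ {c | ∃ p x, (p, x) ∈ s.graph ∧
          M.SameSCC s.graph p t0.1 ∧ M.SameSCC s.graph (M.trans p x) t0.1 ∧
          s.col (p, x) = c} := by
        refine ⟨t.1, t.2, ?_, hscc1 t ht, hscc2 t ht, ?_⟩
        · simpa using hjsub ht
        · have := hInv.1 t (hjsub ht)
          simpa using this
      rw [hmin]
      exact Nat.sInf_le hmem
    have hold : sInf ((fun t : Q × A => M.color t.1 t.2) '' I) = s.col t0 := by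
      apply le_antisymm
      · exact Nat.sInf_le ⟨t0, ht0I, hcolt0.symm⟩
      · refine le_csInf (hne.image _) ?_
        rintro c ⟨t, ht, rfl⟩
        exact hlb t ht
    -- new color of t0 is k
    have hnewt0 : (M.streamRun N).col t0 = k := by
      have h1 : (M.streamRun (j + 1)).col t0 = k := by
        rw [hstep]
        exact (step_col_removed M s (hjsub ht0I) (hstep ▸ ht0r)).1
      have hjN : j + 1 ≤ N := by
        by_contra hc
        push_neg at hc
        have hsub := run_graph_antitone M (Nat.lt_succ_iff.mp hc)
        have hmem := hsub (hjsub ht0I)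
        rw [hN] at hmem
        exact hmem
      obtain ⟨h2, _⟩ := run_col_stable M ht0r hjN
      rw [h2, h1]
    -- new colors on I are ≥ k
    have hnewlb : ∀ t ∈ I, k ≤ (M.streamRun N).col t := by
      intro t ht
      have htN : t ∉ (M.streamRun N).graph := by rw [hN]; exact Set.notMem_empty t
      obtain ⟨c, hcN, hcmem, hcrem, hcol⟩ := removal_time M htN
      have hjc : j ≤ c := by
        by_contra hc
        push_neg at hc
        exact hcrem (run_graph_antitone M (by omega : c + 1 ≤ j) (hjsub ht))
      rw [hcol]
      exact run_counter_mono M hjc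
    have hnew : sInf ((M.streamRun N).col '' I) = k := by
      apply le_antisymm
      · exact Nat.sInf_le ⟨t0, ht0I, hnewt0⟩
      · refine le_csInf (hne.image _) ?_
        rintro c ⟨t, ht, rfl⟩
        exact hnewlb t ht
    rw [hnew, hold, ← hpar]
  · -- increment step: graph unchanged, contradiction with removal of t0
    exfalso
    rw [hstep, heq] at ht0r
    exact ht0r (hjsub ht0I)

lemma runFrom_recolor (M : DPA Q A) (c : Q × A → ℕ) (q : Q) (w : ℕ → A) :
    (M.recolor c).runFrom q w = M.runFrom q w := by
  funext n
  induction n with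
  | zero => rfl
  | succ n ih =>
    show M.trans ((M.recolor c).runFrom q w n) (w n) = M.trans (M.runFrom q w n) (w n)
    rw [ih]

lemma pigeon {β : Type w} [Fintype β] (g : ℕ → β) (S : Set ℕ)
    (hS : ∀ N, ∃ n, N ≤ n ∧ n ∈ S) :
    ∃ v, ∀ N, ∃ n, N ≤ n ∧ n ∈ S ∧ g n = v := by
  by_contra h
  push_neg at h
  choose B hB using h
  obtain ⟨n, hn, hnS⟩ := hS (Finset.univ.sup B)
  exact hB (g n) n (le_trans (Finset.le_sup (Finset.mem_univ (g n))) hn) hnS rfl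

lemma dom_eq_inf_image [Fintype Q] [Fintype A] (M : DPA Q A) (w : ℕ → A) (h : Q × A → ℕ) :
    {c | InfOften (fun n => h (M.runFrom M.init w n, w n)) c}
      = h '' {t : Q × A | ∀ N, ∃ n, N ≤ n ∧ (M.runFrom M.init w n, w n) = t} := by
  ext c
  constructor
  · intro hc
    obtain ⟨v, hv⟩ := pigeon (fun n => (M.runFrom M.init w n, w n))
      {n | h (M.runFrom M.init w n, w n) = c} hc
    refine ⟨v, fun N => ?_, ?_⟩
    · obtain ⟨n, hn, _, he⟩ := hv N
      exact ⟨n, hn, he⟩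
    · obtain ⟨n, _, hS, he⟩ := hv 0
      rw [← he]
      exact hS
  · rintro ⟨t, ht, rfl⟩ N
    obtain ⟨n, hn, he⟩ := ht N
    exact ⟨n, hn, by show h (M.runFrom M.init w n, w n) = h t; rw [he]⟩

/-- The language of the streamlined automaton equals that of the original. -/
lemma lang_eq [Fintype Q] [Fintype A] (M : DPA Q A) (N : ℕ)
    (hN : (M.streamRun N).graph = ∅) :
    (M.recolor (M.streamRun N).col).lang = M.lang := by
  classical
  set f := (M.streamRun N).col with hf
  ext w
  set ρ := M.runFrom M.init w with hρ
  set I := {t : Q × A | ∀ n, ∃ m, n ≤ m ∧ (ρ m, w m) = t} with hI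
  -- I is nonempty
  have hne : I.Nonempty := by
    obtain ⟨v, hv⟩ := pigeon (fun n => (ρ n, w n)) Set.univ
      (fun n => ⟨n, le_refl n, Set.mem_univ n⟩)
    exact ⟨v, fun n => by
      obtain ⟨m, hm, _, he⟩ := hv n
      exact ⟨m, hm, he⟩⟩
  -- eventually all transitions taken are in I
  have hbound : ∀ t : Q × A, ∃ B, t ∈ I ∨ ∀ n, B ≤ n → (ρ n, w n) ≠ t := by
    intro t
    by_cases ht : t ∈ I
    · exact ⟨0, Or.inl ht⟩
    · simp only [hI, Set.mem_setOf_eq] at ht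
      push_neg at ht
      obtain ⟨B, hB⟩ := ht
      exact ⟨B, Or.inr fun n hn => hB n hn⟩
  choose B hB using hbound
  set N0 := Finset.univ.sup B with hN0def
  have hN0 : ∀ n, N0 ≤ n → (ρ n, w n) ∈ I := by
    intro n hn
    rcases hB (ρ n, w n) with h | h
    · exact h
    · exact absurd rfl (h n (le_trans (Finset.le_sup (Finset.mem_univ _)) hn))
  -- paths along the run after N0
  have hpath : ∀ a b, N0 ≤ a → a ≤ b →
      Relation.ReflTransGen (fun p q => ∃ y, (p, y) ∈ I ∧ M.trans p y = q) (ρ a) (ρ b) := by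
    intro a b ha hab
    induction b, hab using Nat.le_induction with
    | base => exact Relation.ReflTransGen.refl
    | succ b hb ih =>
      exact ih.tail ⟨w b, hN0 b (le_trans ha hb), rfl⟩
  -- strong connectivity of I
  have hSC : ∀ t ∈ I, ∀ t' ∈ I, Relation.ReflTransGen
      (fun a b => ∃ y, (a, y) ∈ I ∧ M.trans a y = b) (M.trans t.1 t.2) t'.1 := by
    intro t ht t' ht'
    obtain ⟨m, hm, hme⟩ := ht N0
    obtain ⟨m', hm', hme'⟩ := ht' (m + 1)
    have hfst : ρ m = t.1 := congrArg Prod.fst hme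
    have hsnd : w m = t.2 := congrArg Prod.snd hme
    have h1 : ρ (m + 1) = M.trans t.1 t.2 := by
      show M.trans (ρ m) (w m) = M.trans t.1 t.2
      rw [hfst, hsnd]
    have h2 : ρ m' = t'.1 := congrArg Prod.fst hme'
    have hp := hpath (m + 1) m' (le_trans hm (Nat.le_succ m)) hm'
    rw [h1, h2] at hp
    exact hp
  -- dominating colors as infima over I
  have hrun : (M.recolor f).runFrom M.init w = ρ := runFrom_recolor M f M.init w
  have hcolseq : (M.recolor f).colorsFrom M.init w = fun n => f (ρ n, w n) := by
    funext n
    show (M.recolor f).color ((M.recolor f).runFrom M.init w n) (w n) = f (ρ n, w n)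
    rw [hrun]
    rfl
  have hdomold : M.domColorFrom M.init w =
      sInf ((fun t : Q × A => M.color t.1 t.2) '' I) :=
    congrArg sInf (dom_eq_inf_image M w (fun t : Q × A => M.color t.1 t.2))
  have hdomnew : (M.recolor f).domColorFrom M.init w = sInf (f '' I) := by
    show sInf {c | InfOften ((M.recolor f).colorsFrom M.init w) c} = sInf (f '' I)
    rw [hcolseq]
    exact congrArg sInf (dom_eq_inf_image M w f)
  have hparity := core_parity M N hN I hne hSC
  show Even ((M.recolor f).domColorFrom (M.recolor f).init w) ↔ Even (M.domColorFrom M.init w)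
  have hinit : (M.recolor f).init = M.init := rfl
  rw [hinit, hdomnew, hdomold, Nat.even_iff, Nat.even_iff, hf, hparity]

end SLaux

end StreamliningProof

/-- Every structured DPA can be transformed (in polynomially many steps of
the streamlining procedure) into a language-equivalent streamlined automaton on the same
transition structure whose colors are pointwise at most the original ones. -/
theorem streamlining_polytime_equiv {Q : Type u} {A : Type v} [Fintype Q] [Fintype A]
    (M : DPA Q A) (hM : M.Structured) :
    ∃ n, n ≤ Fintype.card Q * Fintype.card A + M.maxColor + 2 ∧
      (M.streamRun n).graph = ∅ ∧
      (∀ t : Q × A, (M.streamRun n).col t ≤ M.color t.1 t.2) ∧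
      (M.recolor (M.streamRun n).col).lang = M.lang := by
  refine ⟨Fintype.card Q * Fintype.card A + M.maxColor + 1, by omega,
    SLaux.graph_empty_stage M, fun t => ?_, SLaux.lang_eq M _ (SLaux.graph_empty_stage M)⟩
  apply SLaux.final_col_le M
  rw [SLaux.graph_empty_stage M]
  exact Set.notMem_empty t
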